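/- Let V be a nonsingular Hermitian (N+1)×(N+1) complex matrix, and let f, g be maps from ℂ^(n+1) to ℂ^(N+1) whose components are homogeneous polynomials of the same degree d. Suppose ⟨V f(z), f(z)⟩ = ⟨V g(z), g(z)⟩ for all z ∈ ℂ^(n+1), and suppose the components of f are linearly independent polynomials. Then there exists an invertible complex matrix C with C* V C = V such that g(z) = C f(z) for all z. -/

import Mathlib

open MvPolynomial Matrix

lemma map_algebraMap_eval {σ : Type*} (P : MvPolynomial σ ℝ) (x : σ → ℝ) :
    eval (fun s => (x s : ℂ)) (map (algebraMap ℝ ℂ) P) = ((eval x P : ℝ) : ℂ) := by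
  rw [eval_map]
  have := eval₂_comp_left (algebraMap ℝ ℂ) (RingHom.id ℝ) x P
  rw [eval₂_id, RingHom.comp_id] at this
  rw [show (fun s => ((x s : ℝ) : ℂ)) = ⇑(algebraMap ℝ ℂ) ∘ x from rfl, ← this]
  rfl

lemma zero_of_eval_real {σ : Type*} (Q : MvPolynomial σ ℂ)
    (h : ∀ x : σ → ℝ, eval (fun s => (x s : ℂ)) Q = 0) : Q = 0 := by
  set Q1 : MvPolynomial σ ℝ := AddMonoidAlgebra.ofCoeff (Finsupp.mapRange Complex.re Complex.zero_re (AddMonoidAlgebra.coeff Q)) with hQ1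
  set Q2 : MvPolynomial σ ℝ := AddMonoidAlgebra.ofCoeff (Finsupp.mapRange Complex.im Complex.zero_im (AddMonoidAlgebra.coeff Q)) with hQ2
  have hdec : Q = map (algebraMap ℝ ℂ) Q1 + (C Complex.I) * map (algebraMap ℝ ℂ) Q2 := by
    ext μ
    simp only [coeff_add, coeff_map, coeff_C_mul, hQ1, hQ2]
    rw [show (coeff μ Q1) = (coeff μ Q).re from Finsupp.mapRange_apply (hf := Complex.zero_re),
        show (coeff μ Q2) = (coeff μ Q).im from Finsupp.mapRange_apply (hf := Complex.zero_im)]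
    simp only [Complex.coe_algebraMap, Complex.ext_iff, Complex.add_re, Complex.add_im,
      Complex.mul_re, Complex.mul_im,
      Complex.I_re, Complex.I_im, Complex.ofReal_re, Complex.ofReal_im]
    constructor <;> ring
  have hz1 : Q1 = 0 := by
    apply MvPolynomial.funext; intro x
    have := h x
    rw [hdec] at this
    simp only [map_add, _root_.map_mul, eval_C, map_algebraMap_eval] at this
    have hre := congrArg Complex.re this
    simpa using hre
  have hz2 : Q2 = 0 := by
    apply MvPolynomial.funext; intro x
    have := h x
    rw [hdec] at this
    simp only [map_add, _root_.map_mul, eval_C, map_algebraMap_eval] at this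
    have him := congrArg Complex.im this
    simpa using him
  rw [hdec, hz1, hz2]; simp

lemma exists_points {K : Type*} [Field K] {α : Type*} {k : ℕ}
    (v : Fin k → (α → K)) (hv : LinearIndependent K v) :
    ∃ a : Fin k → α, IsUnit (Matrix.of fun i j => v j (a i)) := by
  have main : ∀ m : ℕ, m ≤ k → ∃ a : Fin m → α,
      LinearIndependent K (fun i : Fin m => (fun j => v j (a i) : Fin k → K)) := by
    intro m hm
    induction m with
    | zero => exact ⟨Fin.elim0, linearIndependent_empty_type⟩
    | succ m ih =>
      obtain ⟨a, ha⟩ := ih (le_of_lt (Nat.lt_of_lt_of_le (Nat.lt_succ_self m) hm))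
      -- find a new point whose row is not in the span
      have hex : ∃ x : α, (fun j => v j x) ∉
          Submodule.span K (Set.range (fun i : Fin m => (fun j => v j (a i) : Fin k → K))) := by
        by_contra hcon
        push_neg at hcon
        set U := Submodule.span K (Set.range (fun i : Fin m => (fun j => v j (a i) : Fin k → K)))
        -- find nonzero c in kernel of the m × k matrix
        set R : Matrix (Fin m) (Fin k) K := Matrix.of fun i j => v j (a i)
        have hnotinj : ¬ Function.Injective R.mulVecLin := by
          intro hinj
          have := LinearMap.finrank_le_finrank_of_injective hinj
          simp only [Module.finrank_pi, Fintype.card_fin] at this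
          omega
        have : ∃ c, c ≠ 0 ∧ R.mulVecLin c = 0 := by
          rw [← LinearMap.ker_eq_bot] at hnotinj
          obtain ⟨c, hc, hc0⟩ := Submodule.exists_mem_ne_zero_of_ne_bot hnotinj
          exact ⟨c, hc0, hc⟩
        obtain ⟨c, hc0, hck⟩ := this
        -- the functional w ↦ ∑ j, w j * c j vanishes on U
        set φ : (Fin k → K) →ₗ[K] K :=
          { toFun := fun w => ∑ j, w j * c j
            map_add' := by intro w1 w2; simp [add_mul, Finset.sum_add_distrib]
            map_smul' := by intro r w; simp [Finset.mul_sum, mul_assoc]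
          }
        have hφU : ∀ u ∈ U, φ u = 0 := by
          intro u hu
          induction hu using Submodule.span_induction with
          | mem u hu =>
            obtain ⟨i, rfl⟩ := hu
            have := congrFun hck i
            simpa [φ, R, Matrix.mulVecLin, Matrix.mulVec, dotProduct] using this
          | zero => simp
          | add u w _ _ h1 h2 => rw [map_add, h1, h2, add_zero]
          | smul r u _ h1 => rw [_root_.map_smul, h1, smul_zero]
        have hall : ∀ x : α, ∑ j, v j x * c j = 0 := fun x => hφU _ (hcon x)
        have : ∑ j, c j • v j = 0 := by
          funext x
          simp only [Finset.sum_apply, Pi.smul_apply, smul_eq_mul, Pi.zero_apply]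
          rw [← hall x]; exact Finset.sum_congr rfl fun j _ => mul_comm _ _
        have := linearIndependent_iff'.mp hv Finset.univ c (by simpa using this)
        exact hc0 (funext fun j => this j (Finset.mem_univ j))
      obtain ⟨x, hx⟩ := hex
      refine ⟨Fin.cons x a, ?_⟩
      have : (fun i : Fin (m+1) => (fun j => v j ((Fin.cons x a : Fin (m+1) → α) i) : Fin k → K))
          = Fin.cons (fun j => v j x) (fun i : Fin m => (fun j => v j (a i) : Fin k → K)) := by
        funext i
        refine Fin.cases ?_ ?_ i <;> simp
      rw [this, linearIndependent_fin_cons]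
      exact ⟨ha, hx⟩
  obtain ⟨a, ha⟩ := main k le_rfl
  refine ⟨a, ?_⟩
  set M := Matrix.of fun i j => v j (a i)
  rw [Matrix.isUnit_iff_isUnit_det, isUnit_iff_ne_zero]
  intro hdet
  obtain ⟨c, hc0, hck⟩ := (Matrix.exists_vecMul_eq_zero_iff).mpr hdet
  have : ∑ i, c i • (fun j => v j (a i) : Fin k → K) = 0 := by
    funext j
    have := congrFun hck j
    simpa [Matrix.vecMul, dotProduct, M] using this
  have := linearIndependent_iff'.mp ha Finset.univ c (by simpa using this)
  exact hc0 (funext fun i => this i (Finset.mem_univ i))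

lemma eval_bind1 {σ τ : Type*} (v : τ → ℂ) (s : σ → MvPolynomial τ ℂ) (H : MvPolynomial σ ℂ) :
    eval v (bind₁ s H) = eval (fun u => eval v (s u)) H := by
  induction H using MvPolynomial.induction_on with
  | C a => simp
  | add p q hp hq => simp [hp, hq]
  | mul_X p i hp => simp [hp, bind₁_X_right]

lemma polarize {σ : Type*} (H : MvPolynomial (σ ⊕ σ) ℂ)
    (h : ∀ z : σ → ℂ, eval (Sum.elim z (fun s => starRingEnd ℂ (z s))) H = 0) : H = 0 := by
  classical
  set s : σ ⊕ σ → MvPolynomial (σ ⊕ σ) ℂ := fun u =>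
    Sum.elim (fun j => X (.inl j) + C Complex.I * X (.inr j))
             (fun j => X (.inl j) - C Complex.I * X (.inr j)) u with hs
  set s' : σ ⊕ σ → MvPolynomial (σ ⊕ σ) ℂ := fun u =>
    Sum.elim (fun j => C (2⁻¹ : ℂ) * (X (.inl j) + X (.inr j)))
             (fun j => C (-Complex.I/2) * (X (.inl j) - X (.inr j))) u with hs'
  have key : bind₁ s H = 0 := by
    apply zero_of_eval_real
    intro x
    rw [eval_bind1]
    set z : σ → ℂ := fun j => (x (.inl j) : ℂ) + Complex.I * (x (.inr j)) with hz
    have hpt : (fun u => eval (fun s => ((x s : ℝ) : ℂ)) (s u))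
        = Sum.elim z (fun s => starRingEnd ℂ (z s)) := by
      funext u
      cases u with
      | inl j => simp [hs, hz]
      | inr j =>
        simp only [hs, hz, Sum.elim_inr, map_sub, map_add, _root_.map_mul, eval_X, eval_C,
          Complex.conj_ofReal, Complex.conj_I]
        ring
    rw [hpt, h z]
  have hinv : H = bind₁ s' (bind₁ s H) := by
    rw [bind₁_bind₁]
    have hX : (fun u => bind₁ s' (s u)) = (X : σ ⊕ σ → MvPolynomial (σ ⊕ σ) ℂ) := by
      funext u
      have hI : Complex.I * (-Complex.I/2) = 2⁻¹ := by
        rw [show Complex.I * (-Complex.I/2) = -(Complex.I*Complex.I)/2 by ring, Complex.I_mul_I]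
        norm_num
      have h2A : ∀ A B : MvPolynomial (σ ⊕ σ) ℂ, A + B + (A - B) = C (2:ℂ) * A := by
        intro A B
        rw [map_ofNat C 2]
        ring
      have h2B : ∀ A B : MvPolynomial (σ ⊕ σ) ℂ, A + B - (A - B) = C (2:ℂ) * B := by
        intro A B
        rw [map_ofNat C 2]
        ring
      cases u with
      | inl j =>
        simp only [hs, hs', Sum.elim_inl, map_add, _root_.map_mul, bind₁_X_right, algHom_C, Sum.elim_inr,
          algebraMap_eq]
        rw [← mul_assoc (C Complex.I), ← C_mul, hI, ← mul_add, h2A, ← mul_assoc, ← C_mul]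
        norm_num
      | inr j =>
        simp only [hs, hs', Sum.elim_inr, map_sub, map_add, _root_.map_mul, bind₁_X_right, algHom_C,
          Sum.elim_inl, algebraMap_eq]
        rw [← mul_assoc (C Complex.I), ← C_mul, hI, ← mul_sub, h2B, ← mul_assoc, ← C_mul]
        norm_num
    rw [hX, bind₁_X_left]
    rfl
  rw [hinv, key, map_zero]

lemma eval_conj {σ : Type*} (p : MvPolynomial σ ℂ) (z : σ → ℂ) :
    eval (fun s => starRingEnd ℂ (z s)) (map (starRingEnd ℂ) p) = starRingEnd ℂ (eval z p) := by
  rw [eval_map]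
  have := eval₂_comp_left (starRingEnd ℂ) (RingHom.id ℂ) z p
  rw [eval₂_id, RingHom.comp_id] at this
  rw [show (fun s => starRingEnd ℂ (z s)) = ⇑(starRingEnd ℂ) ∘ z from rfl, ← this]

lemma map_conj_conj {σ : Type*} (p : MvPolynomial σ ℂ) :
    map (starRingEnd ℂ) (map (starRingEnd ℂ) p) = p := by
  rw [MvPolynomial.map_map, show (starRingEnd ℂ).comp (starRingEnd ℂ) = RingHom.id ℂ from
    RingHom.ext fun a => Complex.conj_conj a, MvPolynomial.map_id]

lemma map_conj_smul {σ : Type*} (c : ℂ) (p : MvPolynomial σ ℂ) :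
    map (starRingEnd ℂ) (c • p) = (starRingEnd ℂ c) • map (starRingEnd ℂ) p := by
  rw [smul_eq_C_mul, _root_.map_mul, MvPolynomial.map_C, smul_eq_C_mul]

lemma aux_inv {ι : Type*} [Fintype ι] [DecidableEq ι] {M : Type*} [AddCommGroup M] [Module ℂ M]
    (A : Matrix ι ι ℂ) (hA : IsUnit A) (u w : ι → M)
    (h : ∀ k, ∑ j, A k j • u j = w k) : ∀ j, u j = ∑ k, A⁻¹ j k • w k := by
  intro j
  have h1 : ∑ k, A⁻¹ j k • w k = ∑ k, A⁻¹ j k • ∑ l, A k l • u l := by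
    simp_rw [h]
  have h2 : ∑ k, A⁻¹ j k • ∑ l, A k l • u l = ∑ l, (∑ k, A⁻¹ j k * A k l) • u l := by
    simp_rw [Finset.smul_sum, smul_smul]
    rw [Finset.sum_comm]
    simp_rw [← Finset.sum_smul]
  have h3 : ∀ l, (∑ k, A⁻¹ j k * A k l) = (A⁻¹ * A) j l := fun l => (Matrix.mul_apply).symm
  rw [h1, h2]
  simp_rw [h3, Matrix.nonsing_inv_mul A ((Matrix.isUnit_iff_isUnit_det A).mp hA)]
  simp [Matrix.one_apply]

lemma aux_comp {ι : Type*} [Fintype ι] {M : Type*} [AddCommGroup M] [Module ℂ M]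
    (P Q : Matrix ι ι ℂ) (u v w : ι → M) (h1 : ∀ i, u i = ∑ j, P i j • v j)
    (h2 : ∀ j, v j = ∑ k, Q j k • w k) : ∀ i, u i = ∑ k, (P * Q) i k • w k := by
  intro i
  rw [h1]
  simp_rw [h2, Finset.smul_sum, smul_smul]
  rw [Finset.sum_comm]
  simp_rw [← Finset.sum_smul, ← Matrix.mul_apply]

lemma aux_regroup {ι : Type*} [Fintype ι] {M : Type*} [AddCommGroup M] [Module ℂ M]
    (α : ι → ℂ) (T : Matrix ι ι ℂ) (v : ι → M) :
    ∑ j, (∑ p, T j p * α p) • v j = ∑ p, α p • (∑ j, T j p • v j) := by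
  simp_rw [Finset.sum_smul, Finset.smul_sum, smul_smul]
  rw [Finset.sum_comm]
  simp_rw [mul_comm]

lemma aux_rearr {σ ι : Type*} [Fintype ι] (V : Matrix ι ι ℂ) (c : ι → ℂ)
    (h : ι → MvPolynomial σ ℂ) :
    ∑ i, ∑ j, C (V i j) * C (c j) * h i = ∑ j, c j • (∑ i, C (V i j) * h i) := by
  rw [Finset.sum_comm]
  refine Finset.sum_congr rfl fun j _ => ?_
  rw [Finset.smul_sum]
  refine Finset.sum_congr rfl fun i _ => ?_
  rw [smul_eq_C_mul]
  ring

lemma coeff_term {σ : Type*} (a : ℂ) (p : MvPolynomial σ ℂ) (b : MvPolynomial σ ℂ)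
    (μ : σ →₀ ℕ) :
    coeff μ (C (C a) * map (C : ℂ →+* MvPolynomial σ ℂ) p * C b)
      = C a * C (coeff μ p) * b := by
  rw [mul_comm (C (C a) * map C p) (C b), coeff_C_mul, coeff_C_mul, coeff_map]
  ring
theorem stmt_0 (n N d : ℕ)
    (V : Matrix (Fin (N+1)) (Fin (N+1)) ℂ)
    (hV : V.IsHermitian) (hVinv : IsUnit V)
    (f g : Fin (N+1) → MvPolynomial (Fin (n+1)) ℂ)
    (hf : ∀ i, (f i).IsHomogeneous d)
    (hg : ∀ i, (g i).IsHomogeneous d)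
    (hind : LinearIndependent ℂ f)
    (heq : ∀ z : Fin (n+1) → ℂ,
      ∑ i, ∑ j, V i j * eval z (f j) * starRingEnd ℂ (eval z (f i))
        = ∑ i, ∑ j, V i j * eval z (g j) * starRingEnd ℂ (eval z (g i))) :
    ∃ C : Matrix (Fin (N+1)) (Fin (N+1)) ℂ, IsUnit C ∧ Cᴴ * V * C = V ∧
      ∀ (z : Fin (n+1) → ℂ) (i : Fin (N+1)),
        eval z (g i) = ∑ j, C i j * eval z (f j) := by
  classical
  set fb : (Fin (N+1)) → MvPolynomial (Fin (n+1)) ℂ := fun i => map (starRingEnd ℂ) (f i) with hfb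
  set gb : (Fin (N+1)) → MvPolynomial (Fin (n+1)) ℂ := fun i => map (starRingEnd ℂ) (g i) with hgb
  set H : MvPolynomial ((Fin (n+1)) ⊕ (Fin (n+1))) ℂ :=
    (∑ i, ∑ j, C (V i j) * rename Sum.inl (f j) * rename Sum.inr (fb i))
      - (∑ i, ∑ j, C (V i j) * rename Sum.inl (g j) * rename Sum.inr (gb i)) with hH
  -- Step A : pointwise vanishing on the diagonal
  have hHdiag : ∀ z : (Fin (n+1)) → ℂ, eval (Sum.elim z (fun s => starRingEnd ℂ (z s))) H = 0 := by
    intro z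
    have hterm : ∀ (p q : MvPolynomial (Fin (n+1)) ℂ) (a : ℂ),
        eval (Sum.elim z (fun s => starRingEnd ℂ (z s)))
          (C a * rename Sum.inl p * rename Sum.inr (map (starRingEnd ℂ) q))
        = a * eval z p * starRingEnd ℂ (eval z q) := by
      intro p q a
      rw [_root_.map_mul, _root_.map_mul, eval_C, eval_rename, eval_rename]
      rw [show (Sum.elim z (fun s => starRingEnd ℂ (z s)) ∘ Sum.inl) = z from rfl]
      rw [show (Sum.elim z (fun s => starRingEnd ℂ (z s)) ∘ Sum.inr)
            = (fun s => starRingEnd ℂ (z s)) from rfl]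
      rw [eval_conj]
    rw [hH, map_sub]
    simp only [map_sum, hfb, hgb, hterm]
    rw [heq z, sub_self]
  -- Step B : the polynomial identity
  have hH0 : H = 0 := polarize H hHdiag
  -- Step C : coefficient identity
  set cf : (Fin (N+1)) → MvPolynomial (Fin (n+1)) ℂ := fun j => ∑ i, C (V i j) * fb i with hcf
  set cg : (Fin (N+1)) → MvPolynomial (Fin (n+1)) ℂ := fun j => ∑ i, C (V i j) * gb i with hcg
  have hSl : ∀ p : MvPolynomial (Fin (n+1)) ℂ, sumToIter ℂ (Fin (n+1)) (Fin (n+1)) (rename Sum.inl p)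
      = map (C : ℂ →+* MvPolynomial (Fin (n+1)) ℂ) p := by
    intro p
    induction p using MvPolynomial.induction_on with
    | C a => simp [sumToIter_C]
    | add p q hp hq => simp [hp, hq]
    | mul_X p i hp => simp [hp, sumToIter_Xl]
  have hSr : ∀ p : MvPolynomial (Fin (n+1)) ℂ, sumToIter ℂ (Fin (n+1)) (Fin (n+1)) (rename Sum.inr p)
      = (C : MvPolynomial (Fin (n+1)) ℂ →+* MvPolynomial (Fin (n+1)) (MvPolynomial (Fin (n+1)) ℂ)) p := by
    intro p
    induction p using MvPolynomial.induction_on with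
    | C a => simp [sumToIter_C]
    | add p q hp hq => simp [hp, hq]
    | mul_X p i hp => simp [hp, sumToIter_Xr]
  have hS : (∑ i, ∑ j, (C (C (V i j)) : MvPolynomial (Fin (n+1)) (MvPolynomial (Fin (n+1)) ℂ))
        * map (C : ℂ →+* MvPolynomial (Fin (n+1)) ℂ) (f j) * C (fb i))
      - (∑ i, ∑ j, (C (C (V i j)) : MvPolynomial (Fin (n+1)) (MvPolynomial (Fin (n+1)) ℂ))
        * map (C : ℂ →+* MvPolynomial (Fin (n+1)) ℂ) (g j) * C (gb i)) = 0 := by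
    have h1 := congrArg (sumToIter ℂ (Fin (n+1)) (Fin (n+1))) hH0
    rw [hH, map_sub, map_zero] at h1
    simp only [map_sum, _root_.map_mul, sumToIter_C, hSl, hSr] at h1
    exact h1
  have starP : ∀ μ : (Fin (n+1)) →₀ ℕ,
      ∑ j, coeff μ (f j) • cf j = ∑ j, coeff μ (g j) • cg j := by
    intro μ
    have h0 := congrArg (coeff μ) hS
    simp only [coeff_sub, coeff_sum, coeff_zero, coeff_term] at h0
    rw [sub_eq_zero] at h0
    rw [hcf, hcg]
    rw [← aux_rearr V (fun j => coeff μ (f j)) fb, ← aux_rearr V (fun j => coeff μ (g j)) gb]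
    exact h0
  -- Step D : invertible coefficient matrix for f
  have hvf : LinearIndependent ℂ (fun j : Fin (N+1) => (fun μ => coeff μ (f j) : ((Fin (n+1)) →₀ ℕ) → ℂ)) := by
    rw [Fintype.linearIndependent_iff] at hind ⊢
    intro c hc
    apply hind
    ext μ
    have := congrFun hc μ
    simpa [coeff_sum, coeff_smul] using this
  obtain ⟨μs, hA⟩ := exists_points _ hvf
  set A : Matrix (Fin (N+1)) (Fin (N+1)) ℂ := Matrix.of fun k j => coeff (μs k) (f j) with hAdef
  set B : Matrix (Fin (N+1)) (Fin (N+1)) ℂ := Matrix.of fun k j => coeff (μs k) (g j) with hBdef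
  -- Step E/F : fb in terms of gb
  have hVT : IsUnit Vᵀ := by
    rw [Matrix.isUnit_iff_isUnit_det, Matrix.det_transpose, ← Matrix.isUnit_iff_isUnit_det]
    exact hVinv
  have hcfVT : ∀ j, ∑ i, Vᵀ j i • fb i = cf j := by
    intro j
    rw [hcf]
    exact Finset.sum_congr rfl fun i _ => by rw [smul_eq_C_mul, Matrix.transpose_apply]
  have hcgVT : ∀ j, ∑ i, Vᵀ j i • gb i = cg j := by
    intro j
    rw [hcg]
    exact Finset.sum_congr rfl fun i _ => by rw [smul_eq_C_mul, Matrix.transpose_apply]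
  have hfbcf : ∀ i, fb i = ∑ j, (Vᵀ)⁻¹ i j • cf j := aux_inv Vᵀ hVT fb cf hcfVT
  have hcfA : ∀ j, cf j = ∑ k, A⁻¹ j k • (∑ l, B k l • cg l) := by
    apply aux_inv A hA cf _
    intro k
    simpa only [hAdef, hBdef, Matrix.of_apply] using starP (μs k)
  have hcfBcg : ∀ j, cf j = ∑ l, (A⁻¹ * B) j l • cg l :=
    aux_comp A⁻¹ B cf (fun k => ∑ l, B k l • cg l) cg hcfA (fun _ => rfl)
  have hcggb : ∀ l, cg l = ∑ q, Vᵀ l q • gb q := fun l => (hcgVT l).symm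
  have hfbgb : ∀ i, fb i = ∑ q, ((Vᵀ)⁻¹ * (A⁻¹ * B) * Vᵀ) i q • gb q := by
    have h1 := aux_comp (Vᵀ)⁻¹ (A⁻¹ * B) fb cf cg hfbcf hcfBcg
    exact aux_comp ((Vᵀ)⁻¹ * (A⁻¹ * B)) Vᵀ fb cg gb h1 hcggb
  -- Step G : f in terms of g
  set M0 : Matrix (Fin (N+1)) (Fin (N+1)) ℂ := (Vᵀ)⁻¹ * (A⁻¹ * B) * Vᵀ with hM0
  set B0 : Matrix (Fin (N+1)) (Fin (N+1)) ℂ := Matrix.of fun i q => starRingEnd ℂ (M0 i q) with hB0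
  have hfB : ∀ i, f i = ∑ q, B0 i q • g q := by
    intro i
    have h1 := congrArg (map (starRingEnd ℂ)) (hfbgb i)
    rw [hfb] at h1
    simp only [map_conj_conj, map_sum, map_conj_smul] at h1
    rw [h1]
    refine Finset.sum_congr rfl fun q _ => ?_
    rw [hgb]
    simp only [map_conj_conj, hB0, Matrix.of_apply]
  -- Step H : B0 is invertible
  have hB0unit : IsUnit B0 := by
    rw [Matrix.isUnit_iff_isUnit_det, isUnit_iff_ne_zero]
    intro hdet
    obtain ⟨c, hc0, hck⟩ := (Matrix.exists_vecMul_eq_zero_iff).mpr hdet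
    have hzero : ∑ i, c i • f i = 0 := by
      have h1 : ∑ i, c i • f i = ∑ q, (∑ i, c i * B0 i q) • g q := by
        simp_rw [hfB, Finset.smul_sum, smul_smul]
        rw [Finset.sum_comm]
        simp_rw [← Finset.sum_smul]
      rw [h1]
      have h2 : ∀ q, ∑ i, c i * B0 i q = 0 := by
        intro q
        have := congrFun hck q
        simpa [Matrix.vecMul, dotProduct] using this
      simp [h2]
    have := linearIndependent_iff'.mp hind Finset.univ c (by simpa using hzero)
    exact hc0 (funext fun i => this i (Finset.mem_univ i))
  set Cm : Matrix (Fin (N+1)) (Fin (N+1)) ℂ := B0⁻¹ with hCmdef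
  have hCmunit : IsUnit Cm := by
    rw [hCmdef, Matrix.isUnit_iff_isUnit_det, Matrix.det_nonsing_inv, isUnit_ringInverse]
    exact (Matrix.isUnit_iff_isUnit_det B0).mp hB0unit
  have hgC : ∀ q, g q = ∑ i, Cm q i • f i :=
    aux_inv B0 hB0unit g f (fun k => (hfB k).symm)
  set Cmap : Matrix (Fin (N+1)) (Fin (N+1)) ℂ :=
    Matrix.of fun i q => starRingEnd ℂ (Cm i q) with hCmap
  have hgbfb : ∀ i, gb i = ∑ q, Cmap i q • fb q := by
    intro i
    have h1 := congrArg (map (starRingEnd ℂ)) (hgC i)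
    rw [hgb]
    simp only []
    rw [h1]
    simp only [map_sum, map_conj_smul]
    refine Finset.sum_congr rfl fun q _ => ?_
    simp only [hCmap, Matrix.of_apply, hfb]
  have hcgfb : ∀ j, cg j = ∑ q, (Vᵀ * Cmap) j q • fb q := aux_comp Vᵀ Cmap cg gb fb hcggb hgbfb
  set u' : (Fin (N+1)) → MvPolynomial (Fin (n+1)) ℂ := fun p => ∑ j, Cmᵀ p j • cg j with hu'
  have hstar2 : ∀ μ : (Fin (n+1)) →₀ ℕ,
      ∑ p, coeff μ (f p) • cf p = ∑ p, coeff μ (f p) • u' p := by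
    intro μ
    rw [starP μ]
    have hco : ∀ j, coeff μ (g j) = ∑ p, Cm j p * coeff μ (f p) := by
      intro j
      rw [hgC j]
      simp [coeff_sum, coeff_smul]
    calc ∑ j, coeff μ (g j) • cg j
        = ∑ j, (∑ p, Cm j p * coeff μ (f p)) • cg j := by simp_rw [hco]
      _ = ∑ p, coeff μ (f p) • (∑ j, Cm j p • cg j) := aux_regroup _ Cm cg
      _ = ∑ p, coeff μ (f p) • u' p := by
          rfl
  have hcfu' : ∀ p, cf p = u' p := by
    have hker : ∀ k, ∑ p, A k p • (cf p - u' p)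
        = (fun _ => (0 : MvPolynomial (Fin (n+1)) ℂ)) k := by
      intro k
      have h1 := hstar2 (μs k)
      have h2 : ∑ p, A k p • cf p = ∑ p, A k p • u' p := by
        simpa only [hAdef, Matrix.of_apply] using h1
      simp only [smul_sub, Finset.sum_sub_distrib, h2, sub_self]
    have hres := aux_inv A hA (fun p => cf p - u' p) _ hker
    intro p
    have h3 := hres p
    simp only [smul_zero, Finset.sum_const_zero] at h3
    exact sub_eq_zero.mp h3
  have hu'fb : ∀ p, u' p = ∑ q, (Cmᵀ * (Vᵀ * Cmap)) p q • fb q :=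
    aux_comp Cmᵀ (Vᵀ * Cmap) u' cg fb (fun p => rfl) hcgfb
  have hfbind : ∀ D : Matrix (Fin (N+1)) (Fin (N+1)) ℂ,
      (∀ p, ∑ q, D p q • fb q = 0) → D = 0 := by
    intro D hD
    ext p q
    have h1 := congrArg (map (starRingEnd ℂ)) (hD p)
    simp only [map_sum, map_conj_smul, map_zero] at h1
    have h2 : ∑ q, starRingEnd ℂ (D p q) • f q = 0 := by
      rw [← h1]
      refine Finset.sum_congr rfl fun q _ => ?_
      rw [hfb]
      simp only [map_conj_conj]
    have h3 := linearIndependent_iff'.mp hind Finset.univ _ (by simpa using h2)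
    have h4 := h3 q (Finset.mem_univ q)
    simpa using h4
  have hDzero : Vᵀ - Cmᵀ * (Vᵀ * Cmap) = 0 := by
    apply hfbind
    intro p
    simp only [Matrix.sub_apply, sub_smul, Finset.sum_sub_distrib]
    rw [hcfVT p, ← hu'fb p, hcfu' p, sub_self]
  have hVW : Cmᴴ * V * Cm = V := by
    have h1 : Vᵀ = Cmᵀ * (Vᵀ * Cmap) := by rwa [sub_eq_zero] at hDzero
    have h2 := congrArg Matrix.transpose h1
    rw [Matrix.transpose_transpose, Matrix.transpose_mul, Matrix.transpose_mul,
      Matrix.transpose_transpose] at h2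
    have h3 : Cmapᵀ = Cmᴴ := by
      ext i j
      simp [hCmap, Matrix.conjTranspose_apply, Matrix.transpose_apply]
    rw [h3] at h2
    exact h2.symm
  refine ⟨Cm, hCmunit, hVW, ?_⟩
  intro z i
  rw [hgC i, map_sum]
  refine Finset.sum_congr rfl fun j _ => ?_
  rw [smul_eq_C_mul, _root_.map_mul, eval_C]
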